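/- An integral domain D is v-sharp if and only if D is completely integrally closed. In particular, for any star operation * on D, a *-sharp domain is completely integrally closed. -/

import Mathlib

open scoped nonZeroDivisors

/-- A star operation on an integral domain `D` with quotient field `K`: a map
`I ↦ I*` on (nonzero) fractional ideals such that `D* = D`, `(aI)* = a·I*`,
`I ⊆ I*`, `I ⊆ J → I* ⊆ J*` and `(I*)* = I*`. (The value at `0` is irrelevant.) -/
structure StarOperation (D K : Type*) [CommRing D] [IsDomain D] [Field K]
    [Algebra D K] [IsFractionRing D K] where
  star : FractionalIdeal D⁰ K → FractionalIdeal D⁰ K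
  star_one : star 1 = 1
  star_smul : ∀ (a : K), a ≠ 0 → ∀ I : FractionalIdeal D⁰ K, I ≠ 0 →
    star (FractionalIdeal.spanSingleton D⁰ a * I) = FractionalIdeal.spanSingleton D⁰ a * star I
  le_star : ∀ I : FractionalIdeal D⁰ K, I ≠ 0 → I ≤ star I
  star_mono : ∀ I J : FractionalIdeal D⁰ K, I ≠ 0 → J ≠ 0 → I ≤ J → star I ≤ star J
  star_star : ∀ I : FractionalIdeal D⁰ K, I ≠ 0 → star (star I) = star I

/-- `D` is completely integrally closed (in its quotient field `K`): every almost
integral element of `K` over `D` belongs to `D`. -/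
def IsCompletelyIntegrallyClosed (D K : Type*) [CommRing D] [IsDomain D] [Field K]
    [Algebra D K] [IsFractionRing D K] : Prop :=
  ∀ x : K, (∃ d : D, d ≠ 0 ∧ ∀ n : ℕ, ∃ a : D, algebraMap D K a = algebraMap D K d * x ^ n) →
    ∃ b : D, algebraMap D K b = x

section StarSharpDefs

variable {D K : Type*} [CommRing D] [IsDomain D] [Field K] [Algebra D K] [IsFractionRing D K]

/-- `D` is sharp with respect to the operation `star` ("`*`-sharp"): whenever
`I ⊇ A·B` for nonzero ideals `I, A, B` of `D`, there exist nonzero ideals `H, J`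
with `I* = (HJ)*`, `H* ⊇ A` and `J* ⊇ B`. -/
def IsSharpOp (star : FractionalIdeal D⁰ K → FractionalIdeal D⁰ K) : Prop :=
  ∀ I A B : Ideal D, I ≠ 0 → A ≠ 0 → B ≠ 0 → A * B ≤ I →
    ∃ H J : Ideal D, H ≠ 0 ∧ J ≠ 0 ∧
      star (I : FractionalIdeal D⁰ K) =
        star ((H : FractionalIdeal D⁰ K) * (J : FractionalIdeal D⁰ K)) ∧
      (A : FractionalIdeal D⁰ K) ≤ star (H : FractionalIdeal D⁰ K) ∧
      (B : FractionalIdeal D⁰ K) ≤ star (J : FractionalIdeal D⁰ K)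

/-- `D` is `*`-sharp for the star operation `s`. -/
def StarOperation.IsSharp (s : StarOperation D K) : Prop :=
  IsSharpOp s.star

lemma inv_ne_zero' {I : FractionalIdeal D⁰ K} (hI : I ≠ 0) : I⁻¹ ≠ 0 := by
  obtain ⟨d, hd, hdI⟩ := I.isFractional
  have hmem : algebraMap D K d ∈ I⁻¹ := by
    rw [FractionalIdeal.mem_inv_iff hI]
    intro y hy
    obtain ⟨c, hc⟩ := hdI y hy
    refine ⟨c, trivial, ?_⟩
    simpa [Algebra.smul_def] using hc
  intro h0
  rw [h0] at hmem
  have : algebraMap D K d ≠ 0 :=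
    IsFractionRing.to_map_ne_zero_of_mem_nonZeroDivisors hd
  exact this (by simpa using hmem)

/-- The `v`-operation `I ↦ I_v = (I⁻¹)⁻¹`. -/
noncomputable def vOp (I : FractionalIdeal D⁰ K) : FractionalIdeal D⁰ K := (I⁻¹)⁻¹

lemma vOp_mono {I J : FractionalIdeal D⁰ K} (h : I ≤ J) : vOp I ≤ vOp J := by
  rcases eq_or_ne I 0 with rfl | hI
  · show ((0 : FractionalIdeal D⁰ K)⁻¹)⁻¹ ≤ vOp J
    rw [FractionalIdeal.inv_zero', FractionalIdeal.inv_zero']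
    exact FractionalIdeal.zero_le _
  have hJ : J ≠ 0 := fun hJ0 => hI (le_antisymm (hJ0 ▸ h) (FractionalIdeal.zero_le I))
  exact FractionalIdeal.inv_anti_mono (inv_ne_zero' hJ) (inv_ne_zero' hI)
    (FractionalIdeal.inv_anti_mono hI hJ h)

end StarSharpDefs
section Aux
set_option linter.unusedSectionVars false
open FractionalIdeal
variable {D K : Type*} [CommRing D] [IsDomain D] [Field K] [Algebra D K] [IsFractionRing D K]

lemma exists_ne_zero_mem {I : FractionalIdeal D⁰ K} (hI : I ≠ 0) : ∃ x ∈ I, x ≠ (0 : K) := by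
  by_contra h
  push_neg at h
  exact hI (FractionalIdeal.eq_zero_iff.mpr h)

lemma fi_mul_ne_zero {I J : FractionalIdeal D⁰ K} (hI : I ≠ 0) (hJ : J ≠ 0) : I * J ≠ 0 := by
  obtain ⟨x, hx, hx0⟩ := exists_ne_zero_mem hI
  obtain ⟨y, hy, hy0⟩ := exists_ne_zero_mem hJ
  intro h
  exact mul_ne_zero hx0 hy0 (FractionalIdeal.eq_zero_iff.mp h _ (FractionalIdeal.mul_mem_mul hx hy))

lemma fi_mul_inv_le_one (I : FractionalIdeal D⁰ K) : I * I⁻¹ ≤ 1 := by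
  rw [FractionalIdeal.inv_eq]; exact FractionalIdeal.mul_one_div_le_one

lemma fi_le_inv_iff {I J : FractionalIdeal D⁰ K} (hJ : J ≠ 0) : I ≤ J⁻¹ ↔ I * J ≤ 1 := by
  rw [FractionalIdeal.inv_eq]; exact FractionalIdeal.le_div_iff_mul_le hJ

lemma le_vOp' {I : FractionalIdeal D⁰ K} (hI : I ≠ 0) : I ≤ vOp I := by
  rw [vOp, fi_le_inv_iff (inv_ne_zero' hI)]
  exact fi_mul_inv_le_one I

lemma vOp_ne_zero {I : FractionalIdeal D⁰ K} (hI : I ≠ 0) : vOp I ≠ 0 :=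
  inv_ne_zero' (inv_ne_zero' hI)

lemma inv_vOp {I : FractionalIdeal D⁰ K} (hI : I ≠ 0) : (vOp I)⁻¹ = I⁻¹ :=
  le_antisymm (FractionalIdeal.inv_anti_mono hI (vOp_ne_zero hI) (le_vOp' hI))
    (le_vOp' (inv_ne_zero' hI))

lemma vOp_vOp (I : FractionalIdeal D⁰ K) : vOp (vOp I) = vOp I := by
  rcases eq_or_ne I 0 with rfl | hI
  · show (((((0 : FractionalIdeal D⁰ K)⁻¹)⁻¹)⁻¹)⁻¹) = ((0 : FractionalIdeal D⁰ K)⁻¹)⁻¹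
    simp [FractionalIdeal.inv_zero']
  · show ((vOp I)⁻¹)⁻¹ = vOp I
    rw [inv_vOp hI]; rfl

lemma fi_inv_one : ((1 : FractionalIdeal D⁰ K))⁻¹ = 1 := by
  rw [FractionalIdeal.inv_eq, FractionalIdeal.div_one]

lemma vOp_one : vOp (1 : FractionalIdeal D⁰ K) = 1 := by
  rw [vOp, fi_inv_one, fi_inv_one]

lemma vOp_spanSingleton (x : K) : vOp (spanSingleton D⁰ x) = spanSingleton D⁰ x := by
  rw [vOp, FractionalIdeal.spanSingleton_inv, FractionalIdeal.spanSingleton_inv, inv_inv]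

lemma spanSingleton_mul_inv_cancel {a : K} (ha : a ≠ 0) :
    spanSingleton D⁰ a⁻¹ * spanSingleton D⁰ a = 1 := by
  rw [FractionalIdeal.spanSingleton_mul_spanSingleton, inv_mul_cancel₀ ha,
    FractionalIdeal.spanSingleton_one]

lemma inv_spanSingleton_mul {a : K} (ha : a ≠ 0) {I : FractionalIdeal D⁰ K} (hI : I ≠ 0) :
    (spanSingleton D⁰ a * I)⁻¹ = spanSingleton D⁰ a⁻¹ * I⁻¹ := by
  apply le_antisymm
  · have h1 : spanSingleton D⁰ a * (spanSingleton D⁰ a * I)⁻¹ ≤ I⁻¹ := by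
      rw [fi_le_inv_iff hI]
      calc spanSingleton D⁰ a * (spanSingleton D⁰ a * I)⁻¹ * I
          = (spanSingleton D⁰ a * I)⁻¹ * (spanSingleton D⁰ a * I) := by ring
        _ ≤ 1 := by rw [mul_comm]; exact fi_mul_inv_le_one _
    calc (spanSingleton D⁰ a * I)⁻¹
        = spanSingleton D⁰ a⁻¹ * (spanSingleton D⁰ a * (spanSingleton D⁰ a * I)⁻¹) := by
          rw [← mul_assoc, spanSingleton_mul_inv_cancel ha, one_mul]
      _ ≤ spanSingleton D⁰ a⁻¹ * I⁻¹ := mul_le_mul_right h1 _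
  · rw [fi_le_inv_iff (fi_mul_ne_zero (FractionalIdeal.spanSingleton_ne_zero_iff.mpr ha) hI)]
    calc spanSingleton D⁰ a⁻¹ * I⁻¹ * (spanSingleton D⁰ a * I)
        = (spanSingleton D⁰ a⁻¹ * spanSingleton D⁰ a) * (I⁻¹ * I) := by ring
      _ = I⁻¹ * I := by rw [spanSingleton_mul_inv_cancel ha, one_mul]
      _ ≤ 1 := by rw [mul_comm]; exact fi_mul_inv_le_one _

lemma vOp_spanSingleton_mul {a : K} (ha : a ≠ 0) {I : FractionalIdeal D⁰ K} (hI : I ≠ 0) :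
    vOp (spanSingleton D⁰ a * I) = spanSingleton D⁰ a * vOp I := by
  rw [vOp, inv_spanSingleton_mul ha hI,
    inv_spanSingleton_mul (inv_ne_zero ha) (inv_ne_zero' hI), inv_inv]
  rfl

lemma vOp_mul_vOp {X Y : FractionalIdeal D⁰ K} (hX : X ≠ 0) (hY : Y ≠ 0) :
    vOp (X * vOp Y) = vOp (X * Y) := by
  have key : (X * vOp Y)⁻¹ = (X * Y)⁻¹ := by
    apply le_antisymm
    · exact FractionalIdeal.inv_anti_mono (fi_mul_ne_zero hX hY)
        (fi_mul_ne_zero hX (vOp_ne_zero hY))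
        (mul_le_mul_right (le_vOp' hY) _)
    · rw [fi_le_inv_iff (fi_mul_ne_zero hX (vOp_ne_zero hY))]
      have h1 : (X * Y)⁻¹ * X ≤ (vOp Y)⁻¹ := by
        rw [inv_vOp hY, fi_le_inv_iff hY, mul_assoc, mul_comm]
        exact fi_mul_inv_le_one _
      calc (X * Y)⁻¹ * (X * vOp Y) = ((X * Y)⁻¹ * X) * vOp Y := by ring
        _ ≤ (vOp Y)⁻¹ * vOp Y := mul_le_mul_left h1 _
        _ ≤ 1 := by rw [mul_comm]; exact fi_mul_inv_le_one _
  show ((X * vOp Y)⁻¹)⁻¹ = ((X * Y)⁻¹)⁻¹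
  rw [key]

end Aux
section Aux2
set_option linter.unusedSectionVars false
open FractionalIdeal
variable {D K : Type*} [CommRing D] [IsDomain D] [Field K] [Algebra D K] [IsFractionRing D K]

lemma vOp_le_one {X : FractionalIdeal D⁰ K} (hX : X ≤ 1) : vOp X ≤ 1 := by
  have h := vOp_mono (D := D) (K := K) hX
  rwa [vOp_one] at h

lemma cic_inv_mul_inv (h : IsCompletelyIntegrallyClosed D K) {F : FractionalIdeal D⁰ K}
    (hF : F ≠ 0) : (F * F⁻¹)⁻¹ = 1 := by
  have hFF : F * F⁻¹ ≠ 0 := fi_mul_ne_zero hF (inv_ne_zero' hF)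
  apply le_antisymm
  · intro z hz
    rcases eq_or_ne z 0 with rfl | hz0
    · exact zero_mem (1 : FractionalIdeal D⁰ K)
    have h1 : spanSingleton D⁰ z * (F * F⁻¹) ≤ 1 := by
      rw [← fi_le_inv_iff hFF]
      exact (FractionalIdeal.spanSingleton_le_iff_mem).mpr hz
    have h2 : spanSingleton D⁰ z * F⁻¹ ≤ F⁻¹ := by
      rw [fi_le_inv_iff hF]
      calc spanSingleton D⁰ z * F⁻¹ * F = spanSingleton D⁰ z * (F * F⁻¹) := by ring
        _ ≤ 1 := h1
    have hpow : ∀ (n : ℕ) (u : K), u ∈ F⁻¹ → z ^ n * u ∈ F⁻¹ := by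
      intro n
      induction n with
      | zero => intro u hu; simpa using hu
      | succ n ih =>
        intro u hu
        rw [pow_succ, mul_assoc]
        exact ih _ (h2 (FractionalIdeal.mul_mem_mul
          (FractionalIdeal.mem_spanSingleton_self _ _) hu))
    obtain ⟨u, hu, hu0⟩ := exists_ne_zero_mem (inv_ne_zero' hF)
    obtain ⟨dd, hdd, hint⟩ := (F⁻¹).isFractional
    obtain ⟨st, t, htmem, hst⟩ := IsFractionRing.div_surjective (A := D) (K := K) u
    have ht0 : algebraMap D K t ≠ 0 :=
      IsFractionRing.to_map_ne_zero_of_mem_nonZeroDivisors htmem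
    have hs : algebraMap D K st = u * algebraMap D K t := by
      field_simp at hst
      rw [hst]
      ring
    have hst0 : st ≠ 0 := by
      intro h0
      apply hu0
      have : u * algebraMap D K t = 0 := by rw [← hs, h0, _root_.map_zero]
      exact (mul_eq_zero.mp this).resolve_right ht0
    have hdd0 : dd ≠ 0 := nonZeroDivisors.ne_zero hdd
    obtain ⟨b, hb⟩ := h z ⟨dd * st, mul_ne_zero hdd0 hst0, fun n => by
      obtain ⟨w, hw⟩ := hint _ (hpow n u hu)
      refine ⟨w * t, ?_⟩
      have hw' : algebraMap D K w = algebraMap D K dd * (z ^ n * u) := by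
        rw [hw, Algebra.smul_def]
      rw [_root_.map_mul, hw', _root_.map_mul, hs]
      ring⟩
    exact (FractionalIdeal.mem_one_iff D⁰).mpr ⟨b, hb⟩
  · rw [fi_le_inv_iff hFF, one_mul]
    exact fi_mul_inv_le_one F

lemma cic_vOp_mul_inv (h : IsCompletelyIntegrallyClosed D K) {F : FractionalIdeal D⁰ K}
    (hF : F ≠ 0) : vOp (F * F⁻¹) = 1 := by
  rw [vOp, cic_inv_mul_inv h hF, fi_inv_one]

lemma star_le_vOp (s : StarOperation D K) {I : FractionalIdeal D⁰ K} (hI : I ≠ 0) :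
    s.star I ≤ vOp I := by
  intro x hx
  refine (FractionalIdeal.mem_inv_iff (inv_ne_zero' hI)).mpr fun y hy => ?_
  rcases eq_or_ne y 0 with rfl | hy0
  · rw [mul_zero]; exact zero_mem (1 : FractionalIdeal D⁰ K)
  have hy' : spanSingleton D⁰ y * I ≤ 1 := by
    rw [← fi_le_inv_iff hI]
    exact FractionalIdeal.spanSingleton_le_iff_mem.mpr hy
  have hI_le : I ≤ spanSingleton D⁰ y⁻¹ := by
    calc I = spanSingleton D⁰ y⁻¹ * (spanSingleton D⁰ y * I) := by
            rw [← mul_assoc, spanSingleton_mul_inv_cancel hy0, one_mul]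
      _ ≤ spanSingleton D⁰ y⁻¹ * 1 := mul_le_mul_right hy' _
      _ = spanSingleton D⁰ y⁻¹ := mul_one _
  have h1 : s.star (spanSingleton D⁰ y⁻¹) = spanSingleton D⁰ y⁻¹ := by
    have h2 := s.star_smul y⁻¹ (inv_ne_zero hy0) 1 one_ne_zero
    rw [mul_one, s.star_one, mul_one] at h2
    exact h2
  have hstar : s.star I ≤ spanSingleton D⁰ y⁻¹ := by
    calc s.star I ≤ s.star (spanSingleton D⁰ y⁻¹) :=
          s.star_mono _ _ hI (FractionalIdeal.spanSingleton_ne_zero_iff.mpr (inv_ne_zero hy0)) hI_le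
      _ = spanSingleton D⁰ y⁻¹ := h1
  obtain ⟨r, hr⟩ := (FractionalIdeal.mem_spanSingleton D⁰).mp (hstar hx)
  refine (FractionalIdeal.mem_one_iff D⁰).mpr ⟨r, ?_⟩
  rw [← hr, Algebra.smul_def, mul_assoc, inv_mul_cancel₀ hy0, mul_one]

end Aux2
section Aux3
set_option linter.unusedSectionVars false
open FractionalIdeal
variable {D K : Type*} [CommRing D] [IsDomain D] [Field K] [Algebra D K] [IsFractionRing D K]

lemma sharp_to_cic (hsharp : IsSharpOp (D := D) (K := K) vOp) :
    IsCompletelyIntegrallyClosed D K := by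
  intro x hx
  rcases eq_or_ne x 0 with rfl | hx0
  · exact ⟨0, _root_.map_zero _⟩
  obtain ⟨d, hd0, hxn⟩ := hx
  choose a ha using hxn
  set A : Ideal D := Ideal.span (Set.range a) with hAdef
  have ha0 : algebraMap D K (a 0) = algebraMap D K d := by rw [ha 0, pow_zero, mul_one]
  have ha0' : a 0 ≠ 0 := by
    intro h0
    apply hd0
    apply (IsFractionRing.to_map_eq_zero_iff (K := K)).mp
    rw [← ha0, h0, _root_.map_zero]
  have hAmem : ∀ n, a n ∈ A := fun n => Ideal.subset_span ⟨n, rfl⟩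
  have hAne : A ≠ 0 := by
    intro h0
    apply ha0'
    have h1 := hAmem 0
    rw [h0] at h1
    simpa using h1
  have hA'ne : (A : FractionalIdeal D⁰ K) ≠ 0 :=
    FractionalIdeal.coeIdeal_ne_zero.mpr (by simpa using hAne)
  set A' : FractionalIdeal D⁰ K := (A : FractionalIdeal D⁰ K) with hA'def
  have hc' : algebraMap D K (a 0) ≠ 0 := by
    rw [ha0]
    exact fun h1 => hd0 ((IsFractionRing.to_map_eq_zero_iff (K := K)).mp h1)
  set c' : K := algebraMap D K (a 0) with hc'def
  -- x * A' ≤ A'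
  have hxA : spanSingleton D⁰ x * A' ≤ A' := by
    rw [hA'def, ← FractionalIdeal.coe_le_coe, FractionalIdeal.coe_mul,
      FractionalIdeal.coe_spanSingleton, FractionalIdeal.coe_coeIdeal, hAdef,
      IsLocalization.coeSubmodule_span, Submodule.span_mul_span]
    refine Submodule.span_le.mpr ?_
    rintro y ⟨u, hu, v, hv, rfl⟩
    obtain rfl : u = x := hu
    obtain ⟨w, ⟨n, rfl⟩, rfl⟩ := hv
    refine Submodule.subset_span ⟨a (n + 1), ⟨n + 1, rfl⟩, ?_⟩
    rw [ha (n + 1), ha n, pow_succ]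
    ring
  -- the ideals for sharpness
  set I₀ : Ideal D := Ideal.span {a 0} with hI₀def
  have hI₀ne : I₀ ≠ 0 := by
    simp only [hI₀def, ne_eq, Ideal.span_singleton_eq_bot, Submodule.zero_eq_bot]
    exact ha0'
  have hI₀coe : (I₀ : FractionalIdeal D⁰ K) = spanSingleton D⁰ c' := by
    rw [hI₀def, FractionalIdeal.coeIdeal_span_singleton]
  have hcA : spanSingleton D⁰ c' ≤ A' :=
    FractionalIdeal.spanSingleton_le_iff_mem.mpr
      (FractionalIdeal.mem_coeIdeal_of_mem D⁰ (hAmem 0))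
  have hB'le1 : spanSingleton D⁰ c' * A'⁻¹ ≤ 1 :=
    le_trans (mul_le_mul_left hcA _) (fi_mul_inv_le_one A')
  obtain ⟨B, hB⟩ := FractionalIdeal.le_one_iff_exists_coeIdeal.mp hB'le1
  have hB'ne : spanSingleton D⁰ c' * A'⁻¹ ≠ 0 :=
    fi_mul_ne_zero (FractionalIdeal.spanSingleton_ne_zero_iff.mpr hc') (inv_ne_zero' hA'ne)
  have hBne : B ≠ 0 := by
    intro h0
    apply hB'ne
    rw [← hB, h0]
    simp
  have hABle : A * B ≤ I₀ := by
    rw [← FractionalIdeal.coeIdeal_le_coeIdeal (K := K), FractionalIdeal.coeIdeal_mul, hB,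
      hI₀coe]
    calc A' * (spanSingleton D⁰ c' * A'⁻¹) = spanSingleton D⁰ c' * (A' * A'⁻¹) := by ring
      _ ≤ spanSingleton D⁰ c' * 1 := mul_le_mul_right (fi_mul_inv_le_one A') _
      _ = spanSingleton D⁰ c' := mul_one _
  obtain ⟨H, J, hHne, hJne, hv, hAle, hBle⟩ := hsharp I₀ A B hI₀ne hAne hBne hABle
  set H' : FractionalIdeal D⁰ K := (H : FractionalIdeal D⁰ K) with hH'def
  set J' : FractionalIdeal D⁰ K := (J : FractionalIdeal D⁰ K) with hJ'def
  have hH'ne : H' ≠ 0 := FractionalIdeal.coeIdeal_ne_zero.mpr (by simpa using hHne)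
  have hJ'ne : J' ≠ 0 := FractionalIdeal.coeIdeal_ne_zero.mpr (by simpa using hJne)
  rw [hI₀coe, vOp_spanSingleton] at hv
  -- hv : spanSingleton D⁰ c' = vOp (H' * J')
  rw [hB] at hBle
  -- H' * J' ≤ spanSingleton c'
  have hHJle : H' * J' ≤ spanSingleton D⁰ c' := by
    rw [hv]
    exact le_vOp' (fi_mul_ne_zero hH'ne hJ'ne)
  -- H'⁻¹ ≤ A'⁻¹
  have hHinv : H'⁻¹ ≤ A'⁻¹ := by
    rw [← inv_vOp hH'ne]
    exact FractionalIdeal.inv_anti_mono hA'ne (vOp_ne_zero hH'ne) hAle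
  -- J'⁻¹ ≤ spanSingleton c'⁻¹ * vOp A'
  have hJinv : J'⁻¹ ≤ spanSingleton D⁰ c'⁻¹ * vOp A' := by
    have h1 : J'⁻¹ ≤ (spanSingleton D⁰ c' * A'⁻¹)⁻¹ := by
      rw [← inv_vOp hJ'ne]
      exact FractionalIdeal.inv_anti_mono hB'ne (vOp_ne_zero hJ'ne) hBle
    rwa [inv_spanSingleton_mul hc' (inv_ne_zero' hA'ne)] at h1
  -- H' ≤ vOp A'
  have hH_le : H' ≤ vOp A' := by
    have h1 : spanSingleton D⁰ c'⁻¹ * H' ≤ J'⁻¹ := by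
      rw [fi_le_inv_iff hJ'ne, mul_assoc]
      calc spanSingleton D⁰ c'⁻¹ * (H' * J') ≤ spanSingleton D⁰ c'⁻¹ * spanSingleton D⁰ c' :=
            mul_le_mul_right hHJle _
        _ = 1 := spanSingleton_mul_inv_cancel hc'
    calc H' = spanSingleton D⁰ c' * (spanSingleton D⁰ c'⁻¹ * H') := by
          rw [← mul_assoc, mul_comm (spanSingleton D⁰ c'), spanSingleton_mul_inv_cancel hc',
            one_mul]
      _ ≤ spanSingleton D⁰ c' * J'⁻¹ := mul_le_mul_right h1 _
      _ ≤ spanSingleton D⁰ c' * (spanSingleton D⁰ c'⁻¹ * vOp A') :=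
          mul_le_mul_right hJinv _
      _ = vOp A' := by
          rw [← mul_assoc, mul_comm (spanSingleton D⁰ c'), spanSingleton_mul_inv_cancel hc',
            one_mul]
  -- J' ≤ spanSingleton c' * A'⁻¹
  have hJ_le : J' ≤ spanSingleton D⁰ c' * A'⁻¹ := by
    have h1 : spanSingleton D⁰ c'⁻¹ * J' ≤ H'⁻¹ := by
      rw [fi_le_inv_iff hH'ne, mul_assoc, mul_comm J' H']
      calc spanSingleton D⁰ c'⁻¹ * (H' * J') ≤ spanSingleton D⁰ c'⁻¹ * spanSingleton D⁰ c' :=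
            mul_le_mul_right hHJle _
        _ = 1 := spanSingleton_mul_inv_cancel hc'
    calc J' = spanSingleton D⁰ c' * (spanSingleton D⁰ c'⁻¹ * J') := by
          rw [← mul_assoc, mul_comm (spanSingleton D⁰ c'), spanSingleton_mul_inv_cancel hc',
            one_mul]
      _ ≤ spanSingleton D⁰ c' * H'⁻¹ := mul_le_mul_right h1 _
      _ ≤ spanSingleton D⁰ c' * A'⁻¹ := mul_le_mul_right hHinv _
  set G : FractionalIdeal D⁰ K := vOp A' * A'⁻¹ with hGdef
  have hGne : G ≠ 0 := fi_mul_ne_zero (vOp_ne_zero hA'ne) (inv_ne_zero' hA'ne)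
  have hHJG : H' * J' ≤ spanSingleton D⁰ c' * G := by
    calc H' * J' ≤ vOp A' * (spanSingleton D⁰ c' * A'⁻¹) :=
          le_trans (mul_le_mul_left hH_le _)
            (mul_le_mul_right hJ_le _)
      _ = spanSingleton D⁰ c' * G := by rw [hGdef]; ring
  have hone_le : 1 ≤ vOp G := by
    have h1 : spanSingleton D⁰ c' ≤ spanSingleton D⁰ c' * vOp G := by
      have h2 := vOp_mono hHJG
      rw [vOp_spanSingleton_mul hc' hGne] at h2
      exact hv.trans_le h2
    calc (1 : FractionalIdeal D⁰ K) = spanSingleton D⁰ c'⁻¹ * spanSingleton D⁰ c' :=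
          (spanSingleton_mul_inv_cancel hc').symm
      _ ≤ spanSingleton D⁰ c'⁻¹ * (spanSingleton D⁰ c' * vOp G) :=
          mul_le_mul_right h1 _
      _ = vOp G := by
          rw [← mul_assoc, spanSingleton_mul_inv_cancel hc', one_mul]
  have hGinv_le : G⁻¹ ≤ 1 := by
    calc G⁻¹ = G⁻¹ * 1 := (mul_one _).symm
      _ ≤ G⁻¹ * vOp G := mul_le_mul_right hone_le _
      _ = G⁻¹ * (G⁻¹)⁻¹ := rfl
      _ ≤ 1 := fi_mul_inv_le_one _
  have hxG : spanSingleton D⁰ x ≤ G⁻¹ := by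
    rw [fi_le_inv_iff hGne, hGdef]
    have h1 : spanSingleton D⁰ x * vOp A' ≤ vOp A' := by
      rw [← vOp_spanSingleton_mul hx0 hA'ne]
      exact vOp_mono hxA
    calc spanSingleton D⁰ x * (vOp A' * A'⁻¹) = spanSingleton D⁰ x * vOp A' * A'⁻¹ := by ring
      _ ≤ vOp A' * A'⁻¹ := mul_le_mul_left h1 _
      _ = A'⁻¹ * (A'⁻¹)⁻¹ := mul_comm _ _
      _ ≤ 1 := fi_mul_inv_le_one _
  have hx1 : x ∈ (1 : FractionalIdeal D⁰ K) :=
    FractionalIdeal.spanSingleton_le_iff_mem.mp (le_trans hxG hGinv_le)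
  obtain ⟨b, hb⟩ := (FractionalIdeal.mem_one_iff D⁰).mp hx1
  exact ⟨b, hb⟩

end Aux3
section Aux4
set_option linter.unusedSectionVars false
open FractionalIdeal
variable {D K : Type*} [CommRing D] [IsDomain D] [Field K] [Algebra D K] [IsFractionRing D K]

lemma cic_to_sharp (h : IsCompletelyIntegrallyClosed D K) :
    IsSharpOp (D := D) (K := K) vOp := by
  intro I A B hIne hAne hBne hAB
  set H : Ideal D := A ⊔ I with hHdef
  have hHne : H ≠ 0 := by
    intro h0
    apply hAne
    have : A ≤ H := le_sup_left
    rw [h0] at this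
    exact le_antisymm this (by simp)
  have hBH : B * H ≤ I := by
    rw [hHdef, Ideal.mul_sup]
    exact sup_le (by rw [mul_comm]; exact hAB) Ideal.mul_le_right
  set I' : FractionalIdeal D⁰ K := (I : FractionalIdeal D⁰ K) with hI'def
  set H' : FractionalIdeal D⁰ K := (H : FractionalIdeal D⁰ K) with hH'def
  set B' : FractionalIdeal D⁰ K := (B : FractionalIdeal D⁰ K) with hB'def
  have hI'ne : I' ≠ 0 := FractionalIdeal.coeIdeal_ne_zero.mpr (by simpa using hIne)
  have hH'ne : H' ≠ 0 := FractionalIdeal.coeIdeal_ne_zero.mpr (by simpa using hHne)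
  have hB'ne : B' ≠ 0 := FractionalIdeal.coeIdeal_ne_zero.mpr (by simpa using hBne)
  have hIH : I' ≤ H' := FractionalIdeal.coeIdeal_le_coeIdeal K |>.mpr le_sup_right
  set G : FractionalIdeal D⁰ K := I' * H'⁻¹ with hGdef
  have hGne : G ≠ 0 := fi_mul_ne_zero hI'ne (inv_ne_zero' hH'ne)
  have hGle1 : G ≤ 1 :=
    le_trans (mul_le_mul_left hIH _) (fi_mul_inv_le_one H')
  have hvGle1 : vOp G ≤ 1 := vOp_le_one hGle1
  obtain ⟨J, hJ⟩ := FractionalIdeal.le_one_iff_exists_coeIdeal.mp hvGle1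
  have hJne : J ≠ 0 := by
    intro h0
    apply vOp_ne_zero hGne
    rw [← hJ, h0]
    simp
  have hHH' : H' * H'⁻¹ ≠ 0 := fi_mul_ne_zero hH'ne (inv_ne_zero' hH'ne)
  refine ⟨H, J, hHne, hJne, ?_, ?_, ?_⟩
  · -- vOp I' = vOp (H' * J')
    rw [hJ, vOp_mul_vOp hH'ne hGne]
    have he : H' * G = I' * (H' * H'⁻¹) := by rw [hGdef]; ring
    rw [he, ← vOp_mul_vOp hI'ne hHH', cic_vOp_mul_inv h hH'ne, mul_one]
  · exact le_trans (FractionalIdeal.coeIdeal_le_coeIdeal K |>.mpr le_sup_left) (le_vOp' hH'ne)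
  · -- B' ≤ vOp J'
    rw [hJ, vOp_vOp]
    have h1 : B' * (H' * H'⁻¹) ≤ G := by
      rw [hGdef, ← mul_assoc]
      refine mul_le_mul_left ?_ _
      rw [hB'def, hH'def, ← FractionalIdeal.coeIdeal_mul]
      exact FractionalIdeal.coeIdeal_le_coeIdeal K |>.mpr hBH
    have h2 : vOp (B' * (H' * H'⁻¹)) = vOp B' := by
      rw [← vOp_mul_vOp hB'ne hHH', cic_vOp_mul_inv h hH'ne, mul_one]
    calc B' ≤ vOp B' := le_vOp' hB'ne
      _ = vOp (B' * (H' * H'⁻¹)) := h2.symm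
      _ ≤ vOp G := vOp_mono h1

end Aux4
/-- A domain `D` is `v`-sharp if and only if `D` is completely
integrally closed. In particular, for any star operation `*` on `D`, a `*`-sharp
domain is completely integrally closed. -/
theorem statement6 (D : Type*) [CommRing D] [IsDomain D]
    (K : Type*) [Field K] [Algebra D K] [IsFractionRing D K] :
    (IsSharpOp (D := D) (K := K) vOp ↔ IsCompletelyIntegrallyClosed D K) ∧
    (∀ s : StarOperation D K, s.IsSharp → IsCompletelyIntegrallyClosed D K) := by
  have hmain : IsSharpOp (D := D) (K := K) vOp ↔ IsCompletelyIntegrallyClosed D K :=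
    ⟨sharp_to_cic, cic_to_sharp⟩
  refine ⟨hmain, fun s hs => hmain.mp ?_⟩
  intro I A B hI hA hB hAB
  obtain ⟨H, J, hH, hJ, hv, hA', hB'⟩ := hs I A B hI hA hB hAB
  have hH'ne : (H : FractionalIdeal D⁰ K) ≠ 0 :=
    FractionalIdeal.coeIdeal_ne_zero.mpr (by simpa using hH)
  have hJ'ne : (J : FractionalIdeal D⁰ K) ≠ 0 :=
    FractionalIdeal.coeIdeal_ne_zero.mpr (by simpa using hJ)
  have hI'ne : (I : FractionalIdeal D⁰ K) ≠ 0 :=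
    FractionalIdeal.coeIdeal_ne_zero.mpr (by simpa using hI)
  have vstar : ∀ X : FractionalIdeal D⁰ K, X ≠ 0 → vOp (s.star X) = vOp X := by
    intro X hX
    apply le_antisymm
    · have h1 := vOp_mono (star_le_vOp s hX)
      rwa [vOp_vOp] at h1
    · exact vOp_mono (s.le_star X hX)
  refine ⟨H, J, hH, hJ, ?_, le_trans hA' (star_le_vOp s hH'ne),
    le_trans hB' (star_le_vOp s hJ'ne)⟩
  rw [← vstar _ hI'ne, hv, vstar _ (fi_mul_ne_zero hH'ne hJ'ne)]
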